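/- Let R be a 2,3-torsion free alternative ring with nontrivial idempotent e1, e2 = 1 - e1, satisfying: (1) x12 R21 = 0 implies x12 = 0 and x21 R12 = 0 implies x21 = 0; (2) x11 R12 = 0 or R21 x11 = 0 implies x11 = 0; (3) R12 x22 = 0 or x22 R21 = 0 implies x22 = 0. If a11 ∈ R11, a22 ∈ R22 and [a11 + a22, x] = 0 for all x ∈ R12, then a11 + a22 lies in the center Z(R). -/

import Mathlib

/-- Peirce idempotents: `pe e1 0 = e1`, `pe e1 1 = 1 - e1`. -/
def pe {R : Type*} [NonAssocRing R] (e1 : R) : Fin 2 → R := ![e1, 1 - e1]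

/-- Membership in the Peirce component `R_{ij} = e_i R e_j`. -/
def InP {R : Type*} [NonAssocRing R] (e1 : R) (i j : Fin 2) (x : R) : Prop :=
  ∃ r : R, x = pe e1 i * r * pe e1 j

/-- Condition (1): `x_{ij} R_{ji} = 0 ⟹ x_{ij} = 0` for `i ≠ j`. -/
def Cond1 {R : Type*} [NonAssocRing R] (e1 : R) : Prop :=
  ∀ i j : Fin 2, i ≠ j → ∀ x : R, InP e1 i j x →
    (∀ y : R, InP e1 j i y → x * y = 0) → x = 0

/-- Condition (2): `x_{11} R_{12} = 0` or `R_{21} x_{11} = 0` implies `x_{11} = 0`. -/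
def Cond2 {R : Type*} [NonAssocRing R] (e1 : R) : Prop :=
  ∀ x : R, InP e1 0 0 x →
    ((∀ y : R, InP e1 0 1 y → x * y = 0) ∨ (∀ y : R, InP e1 1 0 y → y * x = 0)) → x = 0

/-- Condition (3): `R_{12} x_{22} = 0` or `x_{22} R_{21} = 0` implies `x_{22} = 0`. -/
def Cond3 {R : Type*} [NonAssocRing R] (e1 : R) : Prop :=
  ∀ x : R, InP e1 1 1 x →
    ((∀ y : R, InP e1 0 1 y → y * x = 0) ∨ (∀ y : R, InP e1 1 0 y → x * y = 0)) → x = 0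

namespace AltAux
variable {R : Type*} [NonAssocRing R]

def aassoc (x y z : R) : R := x*y*z - x*(y*z)

lemma aassoc_def (x y z : R) : aassoc x y z = x*y*z - x*(y*z) := rfl

variable (hAlt1 : ∀ x y : R, x * x * y = x * (x * y))
variable (hAlt2 : ∀ x y : R, y * x * x = y * (x * x))

section
include hAlt1
lemma swap12 (x y z : R) : aassoc y x z = - aassoc x y z := by
  have h1 := hAlt1 (x+y) z
  simp only [add_mul, mul_add] at h1
  unfold aassoc
  linear_combination (norm := abel1) h1 - hAlt1 x z - hAlt1 y z

lemma absorb1 {u : R} (hu : u*u = u) (x : R) : u*(u*x) = u*x := by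
  rw [← hAlt1 u x, hu]
end

section
include hAlt2
lemma swap23 (x y z : R) : aassoc x z y = - aassoc x y z := by
  have h1 := hAlt2 (y+z) x
  simp only [add_mul, mul_add] at h1
  unfold aassoc
  linear_combination (norm := abel1) h1 - hAlt2 y x - hAlt2 z x

lemma absorb2 {u : R} (hu : u*u = u) (x : R) : (x*u)*u = x*u := by
  rw [hAlt2 u x, hu]
end

section
include hAlt1 hAlt2

lemma cyc (x y z : R) : aassoc x y z = aassoc y z x := by
  rw [show aassoc y z x = - aassoc y x z from swap23 hAlt2 y x z,
      show aassoc y x z = - aassoc x y z from swap12 hAlt1 x y z, neg_neg]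

lemma flex (x y : R) : aassoc x y x = 0 := by
  have h := swap23 hAlt2 x x y
  have h0 : aassoc x x y = 0 := sub_eq_zero_of_eq (hAlt1 x y)
  rw [h0, neg_zero] at h; exact h

lemma swap13 (x y z : R) : aassoc z y x = - aassoc x y z := by
  rw [cyc hAlt1 hAlt2 z y x, swap12 hAlt1 x y z]

lemma zeroL1 {u x y : R} (hxu : x*u = 0) (hux : u*x = x) (huy : u*y = y) (hyu : y*u = y) :
    x*y = 0 := by
  have h1 : aassoc y u x = 0 := by rw [aassoc_def, hyu, hux, sub_self]
  have h2 := swap13 hAlt1 hAlt2 y u x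
  rw [h1, neg_zero, aassoc_def, hxu, huy, zero_mul, zero_sub, neg_eq_zero] at h2
  exact h2

lemma zeroL2 {u x y : R} (hux : u*x = x) (hxu : x*u = x) (huy : u*y = 0) (hyu : y*u = y) :
    x*y = 0 := by
  have h1 : aassoc y u x = 0 := by rw [aassoc_def, hyu, hux, sub_self]
  have h2 := swap13 hAlt1 hAlt2 y u x
  rw [h1, neg_zero, aassoc_def, hxu, huy, mul_zero, sub_zero] at h2
  exact h2

lemma zeroL3 {u x y : R} (h2tor : ∀ w : R, (2:ℕ) • w = 0 → w = 0)
    (hu : u*u = u) (hux : u*x = x) (hxu : x*u = x) (huy : u*y = 0) (hyu : y*u = 0) :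
    x*y = 0 := by
  have hA : aassoc y u x = -(y*x) := by rw [aassoc_def, hyu, hux, zero_mul, zero_sub]
  have hC := swap13 hAlt1 hAlt2 y u x
  rw [hA, neg_neg, aassoc_def, hxu, huy, mul_zero, sub_zero] at hC
  have hB : aassoc u x y = aassoc y u x := by rw [cyc hAlt1 hAlt2, cyc hAlt1 hAlt2]
  rw [hA, aassoc_def, hux, ← hC] at hB
  have e2 : u*(x*y) = x*y + x*y := by linear_combination (norm := abel1) -hB
  have e3 : u*(u*(x*y)) = u*(x*y) := absorb1 hAlt1 hu _
  rw [e2, mul_add, e2] at e3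
  apply h2tor
  rw [two_nsmul]
  linear_combination (norm := abel1) e3

lemma containL {u x y : R} (h : aassoc y u x = 0) : u*(x*y) = (u*x)*y := by
  have h' : aassoc u x y = 0 := by rw [cyc hAlt1 hAlt2, cyc hAlt1 hAlt2]; exact h
  rw [aassoc_def, sub_eq_zero] at h'
  exact h'.symm

lemma containR {u x y : R} (h : aassoc y u x = 0) : (x*y)*u = x*(y*u) := by
  have h' : aassoc x y u = 0 := by rw [cyc hAlt1 hAlt2]; exact h
  rw [aassoc_def, sub_eq_zero] at h'
  exact h'

lemma comm3 (x y z : R) :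
    (x*y)*z - z*(x*y) - (x*(y*z) - x*(z*y)) - ((x*z)*y - (z*x)*y)
      = aassoc x y z + aassoc x y z + aassoc x y z := by
  have c1 : aassoc z x y = aassoc x y z := by rw [cyc hAlt1 hAlt2 x y z, cyc hAlt1 hAlt2 y z x]
  have c2 : aassoc x z y = - aassoc x y z := swap23 hAlt2 x y z
  unfold aassoc at c1 c2 ⊢
  linear_combination (norm := abel1) c1 - c2

end

lemma aassoc_one3 (x y : R) : aassoc x y 1 = 0 := by
  rw [aassoc_def, mul_one, mul_one, sub_self]

lemma aassoc_sub3 (x y z w : R) : aassoc x y (z - w) = aassoc x y z - aassoc x y w := by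
  simp only [aassoc_def, mul_sub]
  abel

lemma aassoc_add3 (x y z w : R) : aassoc x y (z + w) = aassoc x y z + aassoc x y w := by
  simp only [aassoc_def, mul_add]
  abel

lemma pe_zero (e : R) : pe e 0 = e := rfl
lemma pe_one (e : R) : pe e 1 = 1 - e := rfl

lemma pe_idem {e : R} (he : e*e = e) (i : Fin 2) : pe e i * pe e i = pe e i := by
  fin_cases i
  · exact he
  · show (1-e)*(1-e) = 1-e
    simp only [mul_sub, sub_mul, one_mul, mul_one, he]
    abel

section
include hAlt1 hAlt2

lemma inP_iff {e : R} (he : e*e = e) (i j : Fin 2) (x : R) :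
    InP e i j x ↔ pe e i * x = x ∧ x * pe e j = x := by
  have hpe : ∀ (k l : Fin 2) (r : R), aassoc (pe e k) r (pe e l) = 0 := by
    intro k l r
    have hef : aassoc e r (1 - e) = 0 := by
      rw [aassoc_sub3, aassoc_one3, flex hAlt1 hAlt2, zero_sub, neg_zero]
    have hfe : aassoc (1-e) r e = 0 := by
      rw [swap13 hAlt1 hAlt2, hef, neg_zero]
    fin_cases k <;> fin_cases l
    · exact flex hAlt1 hAlt2 _ _
    · exact hef
    · exact hfe
    · exact flex hAlt1 hAlt2 _ _
  constructor
  · rintro ⟨r, rfl⟩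
    have hru : pe e i * r * pe e j = pe e i * (r * pe e j) := by
      have h := hpe i j r; rw [aassoc_def, sub_eq_zero] at h; exact h
    constructor
    · rw [hru]; exact absorb1 hAlt1 (pe_idem he i) _
    · exact absorb2 hAlt2 (pe_idem he j) _
  · rintro ⟨h1, h2⟩
    exact ⟨x, by rw [h1, h2]⟩

end
end AltAux

open AltAux in
/-- if $[a_{11}+a_{22}, R_{12}] = 0$ then $a_{11}+a_{22}$ is central. -/
theorem central_of_comm_R12 (R : Type*) [NonAssocRing R]
    (hAlt1 : ∀ x y : R, x * x * y = x * (x * y))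
    (hAlt2 : ∀ x y : R, y * x * x = y * (x * x))
    (h2 : ∀ x : R, (2 : ℕ) • x = 0 → x = 0)
    (h3 : ∀ x : R, (3 : ℕ) • x = 0 → x = 0)
    (e1 : R) (he : e1 * e1 = e1) (he0 : e1 ≠ 0) (he1 : e1 ≠ 1)
    (hc1 : Cond1 e1) (hc2 : Cond2 e1) (hc3 : Cond3 e1)
    (a11 a22 : R) (ha11 : InP e1 0 0 a11) (ha22 : InP e1 1 1 a22)
    (hcomm : ∀ x : R, InP e1 0 1 x → (a11 + a22) * x - x * (a11 + a22) = 0) :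
    a11 + a22 ∈ Set.center R := by
  set f : R := 1 - e1 with hfdef
  have hf : f*f = f := by
    rw [hfdef]; simp only [mul_sub, sub_mul, one_mul, mul_one, he]; abel
  have Lef : ∀ w : R, e1*w + f*w = w := by
    intro w; rw [hfdef, sub_mul, one_mul]; abel
  have Ref : ∀ w : R, w*e1 + w*f = w := by
    intro w; rw [hfdef, mul_sub, mul_one]; abel
  have cvLa : ∀ w : R, e1*w = w → f*w = 0 := fun w h => by
    linear_combination (norm := abel1) Lef w - h
  have cvLb : ∀ w : R, f*w = w → e1*w = 0 := fun w h => by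
    linear_combination (norm := abel1) Lef w - h
  have cvLc : ∀ w : R, e1*w = 0 → f*w = w := fun w h => by
    linear_combination (norm := abel1) Lef w - h
  have cvLd : ∀ w : R, f*w = 0 → e1*w = w := fun w h => by
    linear_combination (norm := abel1) Lef w - h
  have cvRa : ∀ w : R, w*e1 = w → w*f = 0 := fun w h => by
    linear_combination (norm := abel1) Ref w - h
  have cvRb : ∀ w : R, w*f = w → w*e1 = 0 := fun w h => by
    linear_combination (norm := abel1) Ref w - h
  have cvRc : ∀ w : R, w*e1 = 0 → w*f = w := fun w h => by
    linear_combination (norm := abel1) Ref w - h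
  have cvRd : ∀ w : R, w*f = 0 → w*e1 = w := fun w h => by
    linear_combination (norm := abel1) Ref w - h
  have hfe : f*e1 = 0 := cvLa e1 he
  have hef : e1*f = 0 := cvRa e1 he
  have mem : ∀ (i j : Fin 2) (x : R), pe e1 i * x = x → x * pe e1 j = x → InP e1 i j x :=
    fun i j x h1' h2' => ⟨x, by rw [h1', h2']⟩
  obtain ⟨eA, Ae⟩ := (inP_iff hAlt1 hAlt2 he 0 0 a11).mp ha11
  rw [pe_zero] at eA Ae
  obtain ⟨fB, Bf⟩ := (inP_iff hAlt1 hAlt2 he 1 1 a22).mp ha22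
  rw [pe_one, ← hfdef] at fB Bf
  have fA : f*a11 = 0 := cvLa _ eA
  have Af : a11*f = 0 := cvRa _ Ae
  have eB : e1*a22 = 0 := cvLb _ fB
  have Be : a22*e1 = 0 := cvRb _ Bf
  -- The hypothesis, in the useful form
  have H : ∀ m : R, e1*m = m → m*f = m → a11*m = m*a22 := by
    intro m h1' h2'
    have hm := hcomm m (mem 0 1 m (by rw [pe_zero]; exact h1')
      (by rw [pe_one, ← hfdef]; exact h2'))
    simp only [add_mul, mul_add] at hm
    have hBm : a22*m = 0 := zeroL2 hAlt1 hAlt2 fB Bf (cvLa _ h1') h2'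
    have hmA : m*a11 = 0 := zeroL1 hAlt1 hAlt2 (cvRb _ h2') h1' eA Ae
    linear_combination (norm := abel1) hm - hBm + hmA
  -- Part 1 : a11 commutes with R11
  have part1core : ∀ r : R, e1*r = r → r*e1 = r → a11*r = r*a11 := by
    intro r her hre
    have kAr : aassoc r e1 a11 = 0 := by rw [aassoc_def, hre, eA, sub_self]
    have eAr : e1*(a11*r) = a11*r := by rw [containL hAlt1 hAlt2 kAr, eA]
    have Are : (a11*r)*e1 = a11*r := by rw [containR hAlt1 hAlt2 kAr, hre]
    have krA : aassoc a11 e1 r = 0 := by rw [aassoc_def, Ae, her, sub_self]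
    have erA : e1*(r*a11) = r*a11 := by rw [containL hAlt1 hAlt2 krA, her]
    have rAe : (r*a11)*e1 = r*a11 := by rw [containR hAlt1 hAlt2 krA, Ae]
    have hczero : a11*r - r*a11 = 0 := by
      apply hc2 _ (mem 0 0 _ ?m1 ?m2) (Or.inl ?key)
      case m1 => rw [pe_zero, mul_sub, eAr, erA]
      case m2 => rw [pe_zero, sub_mul, Are, rAe]
      case key =>
        intro y hy
        obtain ⟨hey, hyf⟩ := (inP_iff hAlt1 hAlt2 he 0 1 y).mp hy
        rw [pe_zero] at hey
        rw [pe_one, ← hfdef] at hyf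
        have hye : y*e1 = 0 := cvRb _ hyf
        have Hy : a11*y = y*a22 := H y hey hyf
        have hyA : y*a11 = 0 := zeroL1 hAlt1 hAlt2 hye hey eA Ae
        have hyAr : y*(a11*r) = 0 := zeroL1 hAlt1 hAlt2 hye hey eAr Are
        have hyr0 : y*r = 0 := zeroL1 hAlt1 hAlt2 hye hey her hre
        have kry : aassoc y e1 r = 0 := by
          rw [aassoc_def, hye, zero_mul, her, hyr0, sub_self]
        have hery : e1*(r*y) = r*y := by rw [containL hAlt1 hAlt2 kry, her]
        have hrye : (r*y)*e1 = 0 := by rw [containR hAlt1 hAlt2 kry, hye, mul_zero]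
        have hryf : (r*y)*f = r*y := cvRc _ hrye
        have Hry : a11*(r*y) = (r*y)*a22 := H _ hery hryf
        have A1 : a11*r*y = a11*(r*y) := by
          have t : aassoc a11 r y = aassoc y a11 r := by
            rw [cyc hAlt1 hAlt2 a11 r y, cyc hAlt1 hAlt2 r y a11]
          rw [aassoc_def, aassoc_def, hyA, zero_mul, hyAr, sub_self] at t
          exact sub_eq_zero.mp t
        have S := swap12 hAlt1 a11 r y
        rw [aassoc_def, aassoc_def] at S
        have hfr : f*r = 0 := cvLa _ her
        have hrf : r*f = 0 := cvRa _ hre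
        have hBr : a22*r = 0 := zeroL3 hAlt1 hAlt2 h2 hf fB Bf hfr hrf
        have hfry : f*(r*y) = 0 := cvLa _ hery
        have hBry : a22*(r*y) = 0 := zeroL2 hAlt1 hAlt2 fB Bf hfry hryf
        have A2 : r*y*a22 = r*(y*a22) := by
          have t0 : aassoc a22 r y = 0 := by
            rw [aassoc_def, hBr, zero_mul, hBry, sub_self]
          have t1 : aassoc r y a22 = 0 := by
            rw [cyc hAlt1 hAlt2 r y a22, cyc hAlt1 hAlt2 y a22 r]; exact t0
          rw [aassoc_def, sub_eq_zero] at t1; exact t1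
        have F4 : r*(a11*y) = r*(y*a22) := by rw [Hy]
        rw [sub_mul]
        linear_combination (norm := abel1) A1 + A1 + Hry - S - F4 + A2
    exact sub_eq_zero.mp hczero
  -- Part 2 : a22 commutes with R22
  have part2core : ∀ u : R, f*u = u → u*f = u → a22*u = u*a22 := by
    intro u hfu huf
    have hue : u*e1 = 0 := cvRb _ huf
    have heu : e1*u = 0 := cvLb _ hfu
    have k1 : aassoc u f a22 = 0 := by rw [aassoc_def, huf, fB, sub_self]
    have fBu : f*(a22*u) = a22*u := by rw [containL hAlt1 hAlt2 k1, fB]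
    have Buf : (a22*u)*f = a22*u := by rw [containR hAlt1 hAlt2 k1, huf]
    have k2 : aassoc a22 f u = 0 := by rw [aassoc_def, Bf, hfu, sub_self]
    have fuB : f*(u*a22) = u*a22 := by rw [containL hAlt1 hAlt2 k2, hfu]
    have uBf : (u*a22)*f = u*a22 := by rw [containR hAlt1 hAlt2 k2, Bf]
    have hczero : a22*u - u*a22 = 0 := by
      apply hc3 _ (mem 1 1 _ ?m1 ?m2) (Or.inl ?key)
      case m1 => rw [pe_one, ← hfdef, mul_sub, fBu, fuB]
      case m2 => rw [pe_one, ← hfdef, sub_mul, Buf, uBf]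
      case key =>
        intro m hm
        obtain ⟨hem, hmf⟩ := (inP_iff hAlt1 hAlt2 he 0 1 m).mp hm
        rw [pe_zero] at hem
        rw [pe_one, ← hfdef] at hmf
        have hme : m*e1 = 0 := cvRb _ hmf
        have hfm : f*m = 0 := cvLa _ hem
        have Hm : a11*m = m*a22 := H m hem hmf
        have hum : u*m = 0 := zeroL2 hAlt1 hAlt2 hfu huf hfm hmf
        have kmu : aassoc u e1 m = 0 := by
          rw [aassoc_def, hue, zero_mul, hem, hum, sub_self]
        have hemu : e1*(m*u) = m*u := by rw [containL hAlt1 hAlt2 kmu, hem]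
        have hmue : (m*u)*e1 = 0 := by rw [containR hAlt1 hAlt2 kmu, hue, mul_zero]
        have hmuf : (m*u)*f = m*u := cvRc _ hmue
        have Hmu : a11*(m*u) = (m*u)*a22 := H _ hemu hmuf
        have hBum : (a22*u)*m = 0 := zeroL2 hAlt1 hAlt2 fBu Buf hfm hmf
        have t0 : aassoc a22 u m = 0 := by
          rw [aassoc_def, hBum, hum, mul_zero, sub_self]
        have t1 : aassoc m a22 u = 0 := by rw [cyc hAlt1 hAlt2 m a22 u]; exact t0
        have Z1 : m*a22*u - m*(a22*u) = 0 := by rw [← aassoc_def]; exact t1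
        have t2 : aassoc m u a22 = 0 := by
          rw [swap23 hAlt2 m a22 u, t1, neg_zero]
        have Z3 : m*u*a22 - m*(u*a22) = 0 := by rw [← aassoc_def]; exact t2
        have hmA0 : m*a11 = 0 := zeroL1 hAlt1 hAlt2 hme hem eA Ae
        have kAm : aassoc m e1 a11 = 0 := by
          rw [aassoc_def, hme, zero_mul, eA, hmA0, sub_self]
        have heAm : e1*(a11*m) = a11*m := by rw [containL hAlt1 hAlt2 kAm, eA]
        have hAme : (a11*m)*e1 = 0 := by rw [containR hAlt1 hAlt2 kAm, hme, mul_zero]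
        have hAmf : (a11*m)*f = a11*m := cvRc _ hAme
        have huAm : u*(a11*m) = 0 := zeroL2 hAlt1 hAlt2 hfu huf (cvLa _ heAm) hAmf
        have huA : u*a11 = 0 := zeroL3 hAlt1 hAlt2 h2 hf hfu huf fA Af
        have t3 : aassoc u a11 m = 0 := by
          rw [aassoc_def, huA, zero_mul, huAm, sub_self]
        have t4 : aassoc a11 m u = 0 := by
          rw [cyc hAlt1 hAlt2 a11 m u, cyc hAlt1 hAlt2 m u a11]; exact t3
        have Z2 : a11*m*u - a11*(m*u) = 0 := by rw [← aassoc_def]; exact t4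
        have HmU : m*a22*u = a11*m*u := by rw [Hm]
        rw [mul_sub]
        linear_combination (norm := abel1) HmU - Z1 + Z2 + Hmu + Z3
    exact sub_eq_zero.mp hczero
  -- Part 3 : [a, R21] = 0
  have part3core : ∀ t : R, f*t = t → t*e1 = t → a22*t = t*a11 := by
    intro t hft hte
    have het : e1*t = 0 := cvLb _ hft
    have htf : t*f = 0 := cvRa _ hte
    have htB : t*a22 = 0 := zeroL1 hAlt1 hAlt2 htf hft fB Bf
    have hAt : a11*t = 0 := zeroL2 hAlt1 hAlt2 eA Ae het hte
    have kat : aassoc t f a22 = 0 := by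
      rw [aassoc_def, htf, zero_mul, fB, htB, sub_self]
    have fBt : f*(a22*t) = a22*t := by rw [containL hAlt1 hAlt2 kat, fB]
    have kat2 : aassoc t e1 a22 = 0 := by
      rw [aassoc_def, hte, htB, eB, mul_zero, sub_self]
    have Bte : (a22*t)*e1 = a22*t := by rw [containR hAlt1 hAlt2 kat2, hte]
    have ka1 : aassoc a11 f t = 0 := by
      rw [aassoc_def, Af, zero_mul, hft, hAt, sub_self]
    have ftA : f*(t*a11) = t*a11 := by rw [containL hAlt1 hAlt2 ka1, hft]
    have ka2 : aassoc a11 e1 t = 0 := by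
      rw [aassoc_def, Ae, het, mul_zero, sub_zero]; exact hAt
    have tAe : (t*a11)*e1 = t*a11 := by rw [containR hAlt1 hAlt2 ka2, Ae]
    have hczero : a22*t - t*a11 = 0 := by
      apply hc1 1 0 (by decide) _ (mem 1 0 _ ?m1 ?m2) ?key
      case m1 => rw [pe_one, ← hfdef, mul_sub, fBt, ftA]
      case m2 => rw [pe_zero, sub_mul, Bte, tAe]
      case key =>
        intro m hm
        obtain ⟨hem, hmf⟩ := (inP_iff hAlt1 hAlt2 he 0 1 m).mp hm
        rw [pe_zero] at hem
        rw [pe_one, ← hfdef] at hmf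
        have hme : m*e1 = 0 := cvRb _ hmf
        have hfm : f*m = 0 := cvLa _ hem
        have Hm : a11*m = m*a22 := H m hem hmf
        have ktm : aassoc m f t = 0 := by rw [aassoc_def, hmf, hft, sub_self]
        have hftm : f*(t*m) = t*m := by rw [containL hAlt1 hAlt2 ktm, hft]
        have htmf : (t*m)*f = t*m := by rw [containR hAlt1 hAlt2 ktm, hmf]
        have hetm : e1*(t*m) = 0 := cvLb _ hftm
        have htme : (t*m)*e1 = 0 := cvRb _ htmf
        have ctm := part2core (t*m) hftm htmf
        have htmA : (t*m)*a11 = 0 := zeroL3 hAlt1 hAlt2 h2 hf hftm htmf fA Af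
        have hAtm : a11*(t*m) = 0 := zeroL3 hAlt1 hAlt2 h2 he eA Ae hetm htme
        have hmA0 : m*a11 = 0 := zeroL1 hAlt1 hAlt2 hme hem eA Ae
        have hBm : a22*m = 0 := zeroL2 hAlt1 hAlt2 fB Bf hfm hmf
        have tA11 : aassoc t m a11 = 0 := by
          have q : aassoc m a11 t = 0 := by
            rw [aassoc_def, hmA0, zero_mul, hAt, mul_zero, sub_self]
          rw [cyc hAlt1 hAlt2 t m a11]; exact q
        have id3 := comm3 hAlt1 hAlt2 t m (a11+a22)
        have hA : aassoc t m (a11+a22) = aassoc t m a22 := by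
          rw [aassoc_add3, tA11, zero_add]
        rw [hA] at id3
        have P1 : (t*m)*(a11+a22) = (a11+a22)*(t*m) := by
          rw [mul_add, add_mul, htmA, hAtm, zero_add, zero_add, ← ctm]
        have P2 : m*(a11+a22) = (a11+a22)*m := by
          rw [mul_add, add_mul, hmA0, hBm, zero_add, add_zero, ← Hm]
        have P3a : (a11+a22)*t = a22*t := by rw [add_mul, hAt, zero_add]
        have P3b : t*(a11+a22) = t*a11 := by rw [mul_add, htB, add_zero]
        rw [P1, P2, P3a, P3b] at id3
        have eq1 : (a22*t)*m - (t*a11)*m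
            = aassoc t m a22 + aassoc t m a22 + aassoc t m a22 := by
          linear_combination (norm := abel1) id3
        have W1 : a22*t*m - a22*(t*m) = aassoc t m a22 := by
          rw [← cyc hAlt1 hAlt2 a22 t m, aassoc_def]
        have W3 : t*a11*m - t*(a11*m) = 0 := by
          have q := swap23 hAlt2 t m a11
          rw [tA11, neg_zero] at q
          rw [← aassoc_def]; exact q
        have W4 : t*(a11*m) = t*(m*a22) := by rw [Hm]
        have A2def : t*m*a22 - t*(m*a22) = aassoc t m a22 := (aassoc_def t m a22).symm
        have eq2 : (a22*t)*m - (t*a11)*m = aassoc t m a22 + aassoc t m a22 := by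
          linear_combination (norm := abel1) W1 + ctm - W3 - W4 + A2def
        have A2zero : aassoc t m a22 = 0 := by
          have q := eq1.symm.trans eq2
          linear_combination (norm := abel1) q
        rw [sub_mul, eq2, A2zero, add_zero]
    exact sub_eq_zero.mp hczero
  -- commutation with all Peirce components
  have comm11 : ∀ r : R, e1*r = r → r*e1 = r → (a11+a22)*r = r*(a11+a22) := by
    intro r her hre
    have h1' := part1core r her hre
    have hBr : a22*r = 0 := zeroL3 hAlt1 hAlt2 h2 hf fB Bf (cvLa _ her) (cvRa _ hre)
    have hrB : r*a22 = 0 := zeroL3 hAlt1 hAlt2 h2 he her hre eB Be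
    rw [add_mul, mul_add, hBr, hrB, add_zero, add_zero, h1']
  have comm22' : ∀ u : R, f*u = u → u*f = u → (a11+a22)*u = u*(a11+a22) := by
    intro u hfu huf
    have h1' := part2core u hfu huf
    have hAu : a11*u = 0 := zeroL3 hAlt1 hAlt2 h2 he eA Ae (cvLb _ hfu) (cvRb _ huf)
    have huA : u*a11 = 0 := zeroL3 hAlt1 hAlt2 h2 hf hfu huf fA Af
    rw [add_mul, mul_add, hAu, huA, zero_add, zero_add, h1']
  have comm12 : ∀ m : R, e1*m = m → m*f = m → (a11+a22)*m = m*(a11+a22) := by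
    intro m h1' h2'
    have := hcomm m (mem 0 1 m (by rw [pe_zero]; exact h1')
      (by rw [pe_one, ← hfdef]; exact h2'))
    exact sub_eq_zero.mp this
  have comm21 : ∀ t : R, f*t = t → t*e1 = t → (a11+a22)*t = t*(a11+a22) := by
    intro t hft hte
    have h1' := part3core t hft hte
    have hAt : a11*t = 0 := zeroL2 hAlt1 hAlt2 eA Ae (cvLb _ hft) hte
    have htB : t*a22 = 0 := zeroL1 hAlt1 hAlt2 (cvRa _ hte) hft fB Bf
    rw [add_mul, mul_add, hAt, htB, zero_add, add_zero, h1']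
  have commAll : ∀ x : R, (a11+a22)*x = x*(a11+a22) := by
    intro x
    have d1 : (e1*x)*e1 + (e1*x)*f + ((f*x)*e1 + (f*x)*f) = x := by
      rw [Ref (e1*x), Ref (f*x)]; exact Lef x
    have m11l : e1*((e1*x)*e1) = (e1*x)*e1 := by
      have k : aassoc e1 e1 (e1*x) = 0 := by
        rw [aassoc_def]; exact sub_eq_zero_of_eq (hAlt1 e1 (e1*x))
      rw [containL hAlt1 hAlt2 k, absorb1 hAlt1 he]
    have m11r : ((e1*x)*e1)*e1 = (e1*x)*e1 := absorb2 hAlt2 he _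
    have m12l : e1*((e1*x)*f) = (e1*x)*f := by
      have hfe1x : f*(e1*x) = 0 := cvLa _ (absorb1 hAlt1 he x)
      have k : aassoc f e1 (e1*x) = 0 := by
        rw [aassoc_def, hfe, zero_mul, absorb1 hAlt1 he x, hfe1x, sub_self]
      rw [containL hAlt1 hAlt2 k, absorb1 hAlt1 he]
    have m12r : ((e1*x)*f)*f = (e1*x)*f := absorb2 hAlt2 hf _
    have m21l : f*((f*x)*e1) = (f*x)*e1 := by
      have hef1x : e1*(f*x) = 0 := cvLb _ (absorb1 hAlt1 hf x)
      have k : aassoc e1 f (f*x) = 0 := by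
        rw [aassoc_def, hef, zero_mul, absorb1 hAlt1 hf x, hef1x, sub_self]
      rw [containL hAlt1 hAlt2 k, absorb1 hAlt1 hf]
    have m21r : ((f*x)*e1)*e1 = (f*x)*e1 := absorb2 hAlt2 he _
    have m22l : f*((f*x)*f) = (f*x)*f := by
      have k : aassoc f f (f*x) = 0 := by
        rw [aassoc_def]; exact sub_eq_zero_of_eq (hAlt1 f (f*x))
      rw [containL hAlt1 hAlt2 k, absorb1 hAlt1 hf]
    have m22r : ((f*x)*f)*f = (f*x)*f := absorb2 hAlt2 hf _
    have c1 := comm11 _ m11l m11r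
    have c2 := comm12 _ m12l m12r
    have c3 := comm21 _ m21l m21r
    have c4 := comm22' _ m22l m22r
    calc (a11+a22)*x
        = (a11+a22)*((e1*x)*e1 + (e1*x)*f + ((f*x)*e1 + (f*x)*f)) := by rw [d1]
      _ = (a11+a22)*((e1*x)*e1) + (a11+a22)*((e1*x)*f)
            + ((a11+a22)*((f*x)*e1) + (a11+a22)*((f*x)*f)) := by
          rw [mul_add, mul_add, mul_add]
      _ = ((e1*x)*e1)*(a11+a22) + ((e1*x)*f)*(a11+a22)
            + (((f*x)*e1)*(a11+a22) + ((f*x)*f)*(a11+a22)) := by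
          rw [c1, c2, c3, c4]
      _ = ((e1*x)*e1 + (e1*x)*f + ((f*x)*e1 + (f*x)*f))*(a11+a22) := by
          rw [add_mul, add_mul, add_mul]
      _ = x*(a11+a22) := by rw [d1]
  -- nuclearity
  have nuc : ∀ x y : R, aassoc x y (a11+a22) = 0 := by
    intro x y
    have id3 := comm3 hAlt1 hAlt2 x y (a11+a22)
    rw [← commAll (x*y), ← commAll y, ← commAll x] at id3
    apply h3
    have h3A : (3:ℕ) • (aassoc x y (a11+a22))
        = aassoc x y (a11+a22) + aassoc x y (a11+a22) + aassoc x y (a11+a22) := by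
      rw [show (3:ℕ) = 2+1 from rfl, add_nsmul, two_nsmul, one_nsmul]
    rw [h3A]
    linear_combination (norm := abel1) -id3
  rw [Set.mem_center_iff]
  refine ⟨fun b => commAll b, ?_, ?_⟩
  · intro b c
    have q : aassoc (a11+a22) b c = 0 := by
      rw [cyc hAlt1 hAlt2 (a11+a22) b c]; exact nuc b c
    rw [aassoc_def, sub_eq_zero] at q
    exact q.symm
  · intro b c
    have q := nuc b c
    rw [aassoc_def, sub_eq_zero] at q
    exact q
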